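/- For reals α ≥ 2 and λ₀ ∈ (0,1), with σ_γ² = (1−λ₀)/α, the von Neumann entropy formula for the bipartition case β = α holds: −(α/(2πσ_γ²)) ∫_0^{4σ_γ²} ln(x)√((4σ_γ² − x)x) dx − λ₀ ln λ₀ = (1−λ₀)ln(α/(4(1−λ₀))) − (λ₀/2)(4ln 2 − 1) − λ₀ ln λ₀ + 2ln 2 − 1/2. -/

import Mathlib

open Real MeasureTheory intervalIntegral Set

-- continuity helpers
lemma cont_q : Continuous fun u : ℝ => u ^ 2 * Real.log u := by
  have h : Continuous fun u : ℝ => u * (u * Real.log u) :=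
    continuous_id.mul Real.continuous_mul_log
  convert h using 2 with u
  ring

lemma cont_sq_log : Continuous fun θ : ℝ => Real.sin θ ^ 2 * Real.log (Real.sin θ) :=
  cont_q.comp Real.continuous_sin

lemma cont_sq_log_cos : Continuous fun θ : ℝ => Real.cos θ ^ 2 * Real.log (Real.cos θ) :=
  cont_q.comp Real.continuous_cos

lemma cont4 : Continuous fun θ : ℝ => Real.sin θ ^ 4 * Real.log (Real.sin θ) := by
  have h : Continuous fun θ : ℝ => Real.sin θ ^ 2 * (Real.sin θ ^ 2 * Real.log (Real.sin θ)) :=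
    (Real.continuous_sin.pow 2).mul cont_sq_log
  convert h using 2 with θ
  ring

lemma intable_sq_log : IntervalIntegrable (fun θ : ℝ => Real.sin θ ^ 2 * Real.log (Real.sin θ))
    volume 0 (π/2) := cont_sq_log.intervalIntegrable _ _

lemma intable4 : IntervalIntegrable (fun θ : ℝ => Real.sin θ ^ 4 * Real.log (Real.sin θ))
    volume 0 (π/2) := cont4.intervalIntegrable _ _

noncomputable def W1 : ℝ := ∫ θ in (0:ℝ)..(π/2), Real.sin θ ^ 2 * Real.log (Real.sin θ)
noncomputable def W2 : ℝ := ∫ θ in (0:ℝ)..(π/2), Real.sin θ ^ 4 * Real.log (Real.sin θ)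

lemma relA : 3 * W1 - 4 * W2 = -(π/16) := by
  have hab : (0:ℝ) ≤ π/2 := by positivity
  set F : ℝ → ℝ := fun θ => Real.sin θ ^ 3 * Real.cos θ * Real.log (Real.sin θ) with hF
  set g : ℝ → ℝ := fun θ =>
      (3 - 4 * Real.sin θ ^ 2) * (Real.sin θ ^ 2 * Real.log (Real.sin θ))
        + Real.sin θ ^ 2 * Real.cos θ ^ 2 with hg
  have hgc : Continuous g := by
    apply Continuous.add
    · exact (continuous_const.sub (continuous_const.mul (Real.continuous_sin.pow 2))).mul cont_sq_log
    · exact (Real.continuous_sin.pow 2).mul (Real.continuous_cos.pow 2)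
  have hFc : Continuous F := by
    have h : Continuous fun θ : ℝ =>
        (Real.sin θ * Real.cos θ) * (Real.sin θ ^ 2 * Real.log (Real.sin θ)) :=
      (Real.continuous_sin.mul Real.continuous_cos).mul cont_sq_log
    convert h using 2 with θ
    simp only [hF]; ring
  have key : ∫ θ in (0:ℝ)..(π/2), g θ = F (π/2) - F 0 := by
    apply integral_eq_sub_of_hasDeriv_right_of_le hab hFc.continuousOn _
      (hgc.intervalIntegrable _ _)
    intro x hx
    have hs : 0 < Real.sin x := Real.sin_pos_of_pos_of_lt_pi hx.1
      (lt_trans hx.2 (by linarith [Real.pi_pos]))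
    have hd : HasDerivAt F
        ((3 * Real.sin x ^ 2 * Real.cos x * Real.cos x + Real.sin x ^ 3 * (-Real.sin x)) *
          Real.log (Real.sin x) + Real.sin x ^ 3 * Real.cos x * (Real.cos x / Real.sin x)) x := by
      have h1 : HasDerivAt (fun θ => Real.sin θ ^ 3 * Real.cos θ)
          (3 * Real.sin x ^ 2 * Real.cos x * Real.cos x + Real.sin x ^ 3 * (-Real.sin x)) x := by
        have := ((Real.hasDerivAt_sin x).pow 3).mul (Real.hasDerivAt_cos x)
        refine this.congr_deriv ?_
        norm_num
      have h2 : HasDerivAt (fun θ => Real.log (Real.sin θ)) (Real.cos x / Real.sin x) x :=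
        (Real.hasDerivAt_sin x).log (ne_of_gt hs)
      exact h1.mul h2
    have heq : g x = (3 * Real.sin x ^ 2 * Real.cos x * Real.cos x +
        Real.sin x ^ 3 * (-Real.sin x)) * Real.log (Real.sin x) +
        Real.sin x ^ 3 * Real.cos x * (Real.cos x / Real.sin x) := by
      have hc : Real.cos x ^ 2 = 1 - Real.sin x ^ 2 := Real.cos_sq' x
      field_simp [hg]
      linear_combination (-3 * Real.sin x ^ 2 * Real.log (Real.sin x)) * hc
    rw [heq]
    exact hd.hasDerivWithinAt
  have hF0 : F 0 = 0 := by simp [hF]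
  have hFpi : F (π/2) = 0 := by simp [hF]
  have hsplit : ∫ θ in (0:ℝ)..(π/2), g θ = 3 * W1 - 4 * W2 + π/16 := by
    have e1 : ∀ θ : ℝ, g θ = 3 * (Real.sin θ ^ 2 * Real.log (Real.sin θ))
        - 4 * (Real.sin θ ^ 4 * Real.log (Real.sin θ)) + Real.sin θ ^ 2 * Real.cos θ ^ 2 := by
      intro θ; simp only [hg]; ring
    rw [intervalIntegral.integral_congr (fun θ _ => e1 θ)]
    rw [intervalIntegral.integral_add
      (f := fun θ => 3 * (Real.sin θ ^ 2 * Real.log (Real.sin θ))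
        - 4 * (Real.sin θ ^ 4 * Real.log (Real.sin θ)))
      (g := fun θ => Real.sin θ ^ 2 * Real.cos θ ^ 2) (((intable_sq_log.const_mul 3).sub
      (intable4.const_mul 4))) (((Real.continuous_sin.pow 2).mul
      (Real.continuous_cos.pow 2)).intervalIntegrable _ _)]
    rw [intervalIntegral.integral_sub (intable_sq_log.const_mul 3) (intable4.const_mul 4),
      intervalIntegral.integral_const_mul, intervalIntegral.integral_const_mul]
    have : ∫ θ in (0:ℝ)..(π/2), Real.sin θ ^ 2 * Real.cos θ ^ 2 = π/16 := by
      rw [integral_sin_sq_mul_cos_sq, show (4:ℝ) * (π/2) = 2*π by ring, Real.sin_two_pi,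
        mul_zero, Real.sin_zero]
      ring
    rw [this, W1, W2]
  rw [key, hF0, hFpi] at hsplit
  linarith

lemma cont_sin2sq_logsin : Continuous fun θ : ℝ => Real.sin (2*θ) ^ 2 * Real.log (Real.sin θ) := by
  have h : Continuous fun θ : ℝ =>
      4 * Real.cos θ ^ 2 * (Real.sin θ ^ 2 * Real.log (Real.sin θ)) :=
    (continuous_const.mul (Real.continuous_cos.pow 2)).mul cont_sq_log
  convert h using 2 with θ
  rw [Real.sin_two_mul]; ring

lemma cont_sin2sq_logcos : Continuous fun θ : ℝ => Real.sin (2*θ) ^ 2 * Real.log (Real.cos θ) := by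
  have h : Continuous fun θ : ℝ =>
      4 * Real.sin θ ^ 2 * (Real.cos θ ^ 2 * Real.log (Real.cos θ)) :=
    (continuous_const.mul (Real.continuous_sin.pow 2)).mul cont_sq_log_cos
  convert h using 2 with θ
  rw [Real.sin_two_mul]; ring

lemma T_eq : ∫ θ in (0:ℝ)..(π/2), Real.sin (2*θ) ^ 2 * Real.log (Real.sin θ)
    = 4 * W1 - 4 * W2 := by
  have e : ∀ θ : ℝ, Real.sin (2*θ) ^ 2 * Real.log (Real.sin θ)
      = 4 * (Real.sin θ ^ 2 * Real.log (Real.sin θ))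
        - 4 * (Real.sin θ ^ 4 * Real.log (Real.sin θ)) := by
    intro θ
    rw [Real.sin_two_mul]
    have hc : Real.cos θ ^ 2 = 1 - Real.sin θ ^ 2 := Real.cos_sq' θ
    linear_combination (4 * Real.sin θ ^ 2 * Real.log (Real.sin θ)) * hc
  rw [intervalIntegral.integral_congr (fun θ _ => e θ),
    intervalIntegral.integral_sub (intable_sq_log.const_mul 4) (intable4.const_mul 4),
    intervalIntegral.integral_const_mul, intervalIntegral.integral_const_mul, W1, W2]

lemma T2_eq : (∫ θ in (0:ℝ)..(π/2), Real.sin (2*θ) ^ 2 * Real.log (Real.cos θ))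
    = ∫ θ in (0:ℝ)..(π/2), Real.sin (2*θ) ^ 2 * Real.log (Real.sin θ) := by
  have h := intervalIntegral.integral_comp_sub_left
    (a := (0:ℝ)) (b := π/2) (fun θ => Real.sin (2*θ) ^ 2 * Real.log (Real.sin θ)) (π/2)
  rw [sub_self, sub_zero] at h
  rw [← h]
  apply intervalIntegral.integral_congr
  intro θ _
  simp only
  rw [show 2 * (π/2 - θ) = π - 2*θ by ring, Real.sin_pi_sub, Real.sin_pi_div_two_sub]

lemma sin2sq_int : ∫ θ in (0:ℝ)..(π/2), Real.sin (2*θ) ^ 2 = π/4 := by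
  have e : ∀ θ : ℝ, Real.sin (2*θ) ^ 2 = 4 * (Real.sin θ ^ 2 * Real.cos θ ^ 2) := by
    intro θ; rw [Real.sin_two_mul]; ring
  rw [intervalIntegral.integral_congr (fun θ _ => e θ),
    intervalIntegral.integral_const_mul, integral_sin_sq_mul_cos_sq,
    show (4:ℝ) * (π/2) = 2*π by ring, Real.sin_two_pi, mul_zero, Real.sin_zero]
  ring

lemma dup_eq : (∫ θ in (0:ℝ)..(π/2), Real.sin (2*θ) ^ 2 * Real.log (Real.sin (2*θ))) = W1 := by
  set f : ℝ → ℝ := fun u => Real.sin u ^ 2 * Real.log (Real.sin u) with hf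
  have hfc : Continuous f := cont_sq_log
  have h4 : (2:ℝ) * ∫ x in (0:ℝ)..(π/2), f (2*x) = ∫ x in (2*(0:ℝ))..(2*(π/2)), f x :=
    intervalIntegral.mul_integral_comp_mul_left (f := f) (a := 0) (b := π/2) 2
  have h6 : (∫ x in (π/2:ℝ)..π, f x) = ∫ x in (0:ℝ)..(π/2), f x := by
    have h := intervalIntegral.integral_comp_sub_left (a := (0:ℝ)) (b := π/2) f π
    rw [sub_zero] at h
    rw [show π - π/2 = π/2 by ring] at h
    rw [← h]
    apply intervalIntegral.integral_congr
    intro θ _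
    simp only [hf, Real.sin_pi_sub]
  have h5 : (∫ x in (0:ℝ)..π, f x)
      = (∫ x in (0:ℝ)..(π/2), f x) + ∫ x in (π/2:ℝ)..π, f x :=
    (intervalIntegral.integral_add_adjacent_intervals
      (hfc.intervalIntegrable _ _) (hfc.intervalIntegrable _ _)).symm
  rw [show (2:ℝ)*(0:ℝ) = 0 by ring, show (2:ℝ)*(π/2) = π by ring] at h4
  have : (∫ x in (0:ℝ)..(π/2), f (2*x)) = ∫ x in (0:ℝ)..(π/2), f x := by
    rw [h5, h6] at h4
    linarith
  simpa [hf, W1] using this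

lemma relB : 8 * (W1 - W2) = W1 - (π/4) * Real.log 2 := by
  have key : (∫ θ in (0:ℝ)..(π/2), (Real.sin (2*θ) ^ 2 * Real.log (Real.sin θ)
      + Real.sin (2*θ) ^ 2 * Real.log (Real.cos θ)))
      = ∫ θ in (0:ℝ)..(π/2), (Real.sin (2*θ) ^ 2 * Real.log (Real.sin (2*θ))
        - Real.sin (2*θ) ^ 2 * Real.log 2) := by
    apply intervalIntegral.integral_congr
    intro θ hθ
    rw [Set.uIcc_of_le (by positivity)] at hθ
    simp only
    rcases eq_or_lt_of_le hθ.1 with h0 | h0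
    · rw [← h0]; norm_num
    rcases eq_or_lt_of_le hθ.2 with h1 | h1
    · rw [h1]
      rw [show 2 * (π/2) = π by ring, Real.sin_pi]
      norm_num
    have hs : 0 < Real.sin θ := Real.sin_pos_of_pos_of_lt_pi h0
      (lt_trans h1 (by linarith [Real.pi_pos]))
    have hc : 0 < Real.cos θ := Real.cos_pos_of_mem_Ioo
      ⟨by linarith [Real.pi_pos], h1⟩
    rw [Real.sin_two_mul,
      show (2:ℝ) * Real.sin θ * Real.cos θ = 2 * (Real.sin θ * Real.cos θ) by ring,
      Real.log_mul two_ne_zero (by positivity), Real.log_mul hs.ne' hc.ne']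
    ring
  have h2c : Continuous fun θ : ℝ => 2*θ := continuous_const.mul continuous_id
  have c1 : Continuous fun θ : ℝ => Real.sin (2*θ) ^ 2 * Real.log (Real.sin (2*θ)) := by
    have := cont_q.comp (Real.continuous_sin.comp h2c)
    simpa [Function.comp_def] using this
  have c2 : Continuous fun θ : ℝ => Real.sin (2*θ) ^ 2 * Real.log 2 :=
    ((Real.continuous_sin.comp h2c).pow 2).mul continuous_const
  rw [intervalIntegral.integral_add (cont_sin2sq_logsin.intervalIntegrable _ _)
      (cont_sin2sq_logcos.intervalIntegrable _ _),
    intervalIntegral.integral_sub (c1.intervalIntegrable _ _) (c2.intervalIntegrable _ _),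
    intervalIntegral.integral_mul_const, sin2sq_int, dup_eq, T2_eq, T_eq] at key
  linarith

lemma Jval : (∫ θ in (0:ℝ)..(π/2), Real.cos θ ^ 2 * (Real.sin θ ^ 2 * Real.log (Real.sin θ)))
    = π/64 - (π/16) * Real.log 2 := by
  have e : ∀ θ : ℝ, Real.cos θ ^ 2 * (Real.sin θ ^ 2 * Real.log (Real.sin θ))
      = Real.sin θ ^ 2 * Real.log (Real.sin θ) - Real.sin θ ^ 4 * Real.log (Real.sin θ) := by
    intro θ
    have hc : Real.cos θ ^ 2 = 1 - Real.sin θ ^ 2 := Real.cos_sq' θ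
    linear_combination (Real.sin θ ^ 2 * Real.log (Real.sin θ)) * hc
  rw [intervalIntegral.integral_congr (fun θ _ => e θ),
    intervalIntegral.integral_sub intable_sq_log intable4]
  have h1 := relA
  have h2 := relB
  have : (∫ θ in (0:ℝ)..(π/2), Real.sin θ ^ 2 * Real.log (Real.sin θ))
      - (∫ θ in (0:ℝ)..(π/2), Real.sin θ ^ 4 * Real.log (Real.sin θ)) = W1 - W2 := by
    rw [W1, W2]
  rw [this]
  linarith

lemma key_integral {s : ℝ} (hs : 0 < s) :
    (∫ x in (0:ℝ)..(4*s), Real.log x * Real.sqrt ((4*s - x) * x))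
      = 2*π*s^2*Real.log s + π*s^2 := by
  set G : ℝ → ℝ := fun x =>
    2 * (Real.sqrt x * Real.log (Real.sqrt x)) * Real.sqrt (4*s - x) with hG
  have id1 : ∀ x : ℝ, Real.log x * Real.sqrt ((4*s - x) * x) = G x := by
    intro x
    rcases le_or_gt 0 x with hx | hx
    · rw [hG]; simp only
      rw [Real.sqrt_mul' _ hx, Real.log_sqrt hx]
      ring
    · have h1 : Real.sqrt x = 0 := Real.sqrt_eq_zero_of_nonpos hx.le
      have h2 : Real.sqrt ((4*s - x) * x) = 0 := by
        apply Real.sqrt_eq_zero_of_nonpos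
        nlinarith
      rw [hG]; simp [h1, h2]
  have hGc : Continuous G := by
    apply Continuous.mul
    · exact continuous_const.mul (Real.continuous_mul_log.comp Real.continuous_sqrt)
    · exact Real.continuous_sqrt.comp (continuous_const.sub continuous_id)
  have hderiv : ∀ x ∈ Set.uIcc (0:ℝ) (π/2),
      HasDerivAt (fun θ => 4*s*Real.sin θ^2) (4*s*(2*Real.sin x*Real.cos x)) x := by
    intro x _
    have := ((Real.hasDerivAt_sin x).pow 2).const_mul (4*s)
    simpa using this
  have hcont' : ContinuousOn (fun x : ℝ => 4*s*(2*Real.sin x*Real.cos x)) (Set.uIcc 0 (π/2)) :=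
    (continuous_const.mul ((continuous_const.mul Real.continuous_sin).mul
      Real.continuous_cos)).continuousOn
  have sub := intervalIntegral.integral_comp_smul_deriv hderiv hcont' hGc
  rw [Real.sin_zero, Real.sin_pi_div_two] at sub
  norm_num at sub
  -- sub : ∫ θ in 0..π/2, (4*s*(2*sin θ*cos θ)) • G (4*s*sin θ^2) = ∫ x in 0..4*s, G x
  have congr2 : (∫ θ in (0:ℝ)..(π/2), 4*s*(2*Real.sin θ*Real.cos θ) * G (4*s*Real.sin θ^2))
      = ∫ θ in (0:ℝ)..(π/2), ((64*s^2*Real.log (2*Real.sqrt s)) * (Real.sin θ^2*Real.cos θ^2)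
          + (64*s^2) * (Real.cos θ^2 * (Real.sin θ^2 * Real.log (Real.sin θ)))) := by
    apply intervalIntegral.integral_congr
    intro θ hθ
    rw [Set.uIcc_of_le (by positivity)] at hθ
    have hsθ : 0 ≤ Real.sin θ := Real.sin_nonneg_of_nonneg_of_le_pi hθ.1
      (le_trans hθ.2 (by linarith [Real.pi_pos]))
    have hcθ : 0 ≤ Real.cos θ := Real.cos_nonneg_of_mem_Icc
      ⟨by linarith [Real.pi_pos, hθ.1], hθ.2⟩
    have hsq1 : Real.sqrt (4*s*Real.sin θ^2) = 2*Real.sqrt s*Real.sin θ := by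
      rw [show 4*s*Real.sin θ^2 = (2*Real.sqrt s*Real.sin θ)^2 by
        rw [mul_pow, mul_pow, Real.sq_sqrt hs.le]; ring]
      exact Real.sqrt_sq (by positivity)
    have hsq2 : Real.sqrt (4*s - 4*s*Real.sin θ^2) = 2*Real.sqrt s*Real.cos θ := by
      rw [show 4*s - 4*s*Real.sin θ^2 = (2*Real.sqrt s*Real.cos θ)^2 by
        rw [mul_pow, mul_pow, Real.sq_sqrt hs.le, Real.cos_sq']; ring]
      exact Real.sqrt_sq (by positivity)
    simp only [hG]
    rw [hsq1, hsq2]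
    rcases eq_or_lt_of_le hsθ with h0 | h0
    · rw [← h0]; ring_nf
    have hss : Real.sqrt s * Real.sqrt s = s := Real.mul_self_sqrt hs.le
    rw [show 2*Real.sqrt s*Real.sin θ = (2*Real.sqrt s)*Real.sin θ by ring,
      Real.log_mul (by positivity) h0.ne']
    linear_combination (64*s*(Real.log (2*Real.sqrt s) + Real.log (Real.sin θ))
      * (Real.sin θ^2*Real.cos θ^2)) * hss
  have hval : (∫ θ in (0:ℝ)..(π/2), ((64*s^2*Real.log (2*Real.sqrt s))
        * (Real.sin θ^2*Real.cos θ^2)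
        + (64*s^2) * (Real.cos θ^2 * (Real.sin θ^2 * Real.log (Real.sin θ)))))
      = 2*π*s^2*Real.log s + π*s^2 := by
    rw [intervalIntegral.integral_add
      (f := fun θ => (64*s^2*Real.log (2*Real.sqrt s)) * (Real.sin θ^2*Real.cos θ^2))
      (g := fun θ => (64*s^2) * (Real.cos θ^2 * (Real.sin θ^2 * Real.log (Real.sin θ))))
      ((continuous_const.mul ((Real.continuous_sin.pow 2).mul
        (Real.continuous_cos.pow 2))).intervalIntegrable _ _)
      ((continuous_const.mul ((Real.continuous_cos.pow 2).mul
        cont_sq_log)).intervalIntegrable _ _),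
      intervalIntegral.integral_const_mul, intervalIntegral.integral_const_mul,
      integral_sin_sq_mul_cos_sq, Jval,
      show (4:ℝ) * (π/2) = 2*π by ring, Real.sin_two_pi, mul_zero, Real.sin_zero]
    rw [Real.log_mul two_ne_zero (by positivity), Real.log_sqrt hs.le]
    ring
  rw [intervalIntegral.integral_congr (fun x _ => id1 x), ← sub, congr2, hval]

theorem stmt16 (α l0 sg2 : ℝ) (hα : 2 ≤ α) (hl0 : 0 < l0) (hl0' : l0 < 1)
    (hsg2 : sg2 = (1 - l0) / α) :
    -(α / (2 * Real.pi * sg2)) *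
        (∫ x in (0:ℝ)..(4 * sg2), Real.log x * Real.sqrt ((4 * sg2 - x) * x))
      - l0 * Real.log l0 =
    (1 - l0) * Real.log (α / (4 * (1 - l0))) - l0 / 2 * (4 * Real.log 2 - 1)
      - l0 * Real.log l0 + 2 * Real.log 2 - 1 / 2 := by
  have hα0 : (0:ℝ) < α := by linarith
  have h1l0 : (0:ℝ) < 1 - l0 := by linarith
  have hs : 0 < sg2 := by rw [hsg2]; positivity
  rw [key_integral hs, hsg2]
  have e1 : Real.log ((1 - l0)/α) = Real.log (1-l0) - Real.log α :=
    Real.log_div h1l0.ne' hα0.ne'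
  have e2 : Real.log (α/(4*(1-l0))) = Real.log α - (2*Real.log 2 + Real.log (1-l0)) := by
    rw [Real.log_div hα0.ne' (by positivity), Real.log_mul (by norm_num) h1l0.ne',
      show (4:ℝ) = 2^2 by norm_num, Real.log_pow]
    push_cast; ring
  rw [e1, e2]
  have hπ : Real.pi ≠ 0 := Real.pi_ne_zero
  field_simp
  ring
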